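/- Let z = x + iy be a complex number with x ≠ 0 or y² ≤ 1, let ρ₁ = |z−i|, ρ₂ = |z+i|, a = (ρ₁+ρ₂)/2, b = (ρ₂−ρ₁)/2. Then the complex number Z(z) = a·√(1−b²) + i·sign(x)·b·√(a²−1) satisfies Z(z)² = 1 + z². -/

import Mathlib

open Complex

/-- `a(w) = (|w-i| + |w+i|)/2`. -/
noncomputable def aF (w : ℂ) : ℝ :=
  (‖w - Complex.I‖ + ‖w + Complex.I‖) / 2

/-- `b(w) = (|w+i| - |w-i|)/2`. -/
noncomputable def bF (w : ℂ) : ℝ :=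
  (‖w + Complex.I‖ - ‖w - Complex.I‖) / 2

/-- Principal branch `Z(w)` of `√(1+w²)` on the cut plane `ℂ ∖ ((-i∞,-i) ∪ (i,i∞))`. -/
noncomputable def Z (w : ℂ) : ℂ :=
  (aF w * Real.sqrt (1 - (bF w) ^ 2) : ℝ) +
    Complex.I * (Real.sign w.re : ℝ) * (bF w * Real.sqrt ((aF w) ^ 2 - 1) : ℝ)

set_option maxHeartbeats 1000000 in
theorem stmt13 (z : ℂ) (h : z.re ≠ 0 ∨ z.im ^ 2 ≤ 1) : (Z z) ^ 2 = 1 + z ^ 2 := by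
  set x := z.re with hzre'
  set y := z.im with hzim'
  have hzre : z.re = x := rfl
  have hzim : z.im = y := rfl
  set ρ₁ := ‖z - Complex.I‖ with hρ1
  set ρ₂ := ‖z + Complex.I‖ with hρ2
  have hr1 : ρ₁ ^ 2 = x ^ 2 + (y - 1) ^ 2 := by
    rw [hρ1, Complex.sq_norm, Complex.normSq_apply, Complex.sub_re, Complex.sub_im, hzre, hzim,
      Complex.I_re, Complex.I_im]
    ring
  have hr2 : ρ₂ ^ 2 = x ^ 2 + (y + 1) ^ 2 := by
    rw [hρ2, Complex.sq_norm, Complex.normSq_apply, Complex.add_re, Complex.add_im, hzre, hzim,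
      Complex.I_re, Complex.I_im]
    ring
  have h10 : 0 ≤ ρ₁ := norm_nonneg _
  have h20 : 0 ≤ ρ₂ := norm_nonneg _
  have h2I : (z + Complex.I) - (z - Complex.I) = 2 * Complex.I := by ring
  have habs2 : ‖(z + Complex.I) - (z - Complex.I)‖ = 2 := by
    rw [h2I, norm_mul, Complex.norm_I, Complex.norm_two, mul_one]
  have htri : 2 ≤ ρ₁ + ρ₂ := by
    have h := norm_add_le (z + Complex.I) (-(z - Complex.I))
    rw [← sub_eq_add_neg, habs2, norm_neg] at h
    linarith
  have hbabs : |ρ₂ - ρ₁| ≤ 2 := by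
    have h := abs_norm_sub_norm_le (z + Complex.I) (z - Complex.I)
    rw [habs2] at h
    exact h
  have hbabs' := abs_le.mp hbabs
  set a := aF z with ha
  set b := bF z with hb
  have hadef : a = (ρ₁ + ρ₂) / 2 := rfl
  have hbdef : b = (ρ₂ - ρ₁) / 2 := rfl
  have hab : a * b = y := by rw [hadef, hbdef]; nlinarith [hr1, hr2]
  have hsum : a ^ 2 + b ^ 2 = x ^ 2 + y ^ 2 + 1 := by
    rw [hadef, hbdef]; nlinarith [hr1, hr2]
  have ha1 : 1 ≤ a := by rw [hadef]; linarith
  have hb1 : b ^ 2 ≤ 1 := by rw [hbdef]; nlinarith [hbabs'.1, hbabs'.2]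
  have hsa : Real.sqrt (1 - b ^ 2) ^ 2 = 1 - b ^ 2 := Real.sq_sqrt (by linarith)
  have hsb : Real.sqrt (a ^ 2 - 1) ^ 2 = a ^ 2 - 1 := Real.sq_sqrt (by nlinarith)
  set sa := Real.sqrt (1 - b ^ 2) with hsadef
  set sb := Real.sqrt (a ^ 2 - 1) with hsbdef
  have hsa0 : 0 ≤ sa := Real.sqrt_nonneg _
  have hsb0 : 0 ≤ sb := Real.sqrt_nonneg _
  have hx2 : (1 - b ^ 2) * (a ^ 2 - 1) = x ^ 2 := by nlinarith [hab, hsum]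
  have hprod : sa * sb = |x| := by
    rw [hsadef, hsbdef, ← Real.sqrt_mul (by linarith), hx2, Real.sqrt_sq_eq_abs]
  have hZ : Z z = ((a * sa : ℝ) : ℂ) +
      Complex.I * ((Real.sign x : ℝ) : ℂ) * ((b * sb : ℝ) : ℂ) := by
    rw [Z, ← hzre', ← ha, ← hb, ← hsadef, ← hsbdef]
  rw [hZ]
  have hzeq : z = (x : ℂ) + (y : ℂ) * Complex.I := (Complex.re_add_im z).symm
  rw [hzeq]
  set s := Real.sign x with hs
  apply Complex.ext
  · simp only [Complex.ext_iff, pow_two, Complex.add_re, Complex.add_im, Complex.mul_re,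
      Complex.mul_im, Complex.one_re, Complex.one_im, Complex.ofReal_re, Complex.ofReal_im,
      Complex.I_re, Complex.I_im]
    ring_nf
    rcases lt_trichotomy x 0 with hx | hx | hx
    · have hs1 : s = -1 := by rw [hs]; exact Real.sign_of_neg hx
      rw [hs1]
      linear_combination a ^ 2 * hsa - b ^ 2 * hsb + hsum - 2 * (a * b + y) * hab
    · have hs1 : s = 0 := by rw [hs, hx, Real.sign_zero]
      have hy2 : y ^ 2 ≤ 1 := by
        rcases h with h | h
        · exact absurd hx h
        · exact h
      have hm : (1 - b ^ 2) * (a ^ 2 - 1) = 0 := by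
        rw [hx] at hx2; simpa using hx2
      have h1a : 1 ≤ a ^ 2 := by
        calc (1 : ℝ) = 1 ^ 2 := by norm_num
        _ ≤ a ^ 2 := pow_le_pow_left₀ (by norm_num) ha1 2
      have ha2 : a ^ 2 = 1 := by
        rcases mul_eq_zero.mp hm with h' | h'
        · have hb2 : b ^ 2 = 1 := by linarith
          have hay : a ^ 2 = y ^ 2 := by rw [hx] at hsum; linarith
          linarith
        · linarith
      rw [hs1, hx]
      linear_combination a ^ 2 * hsa + ha2 - (a * b + y) * hab
    · have hs1 : s = 1 := by rw [hs]; exact Real.sign_of_pos hx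
      rw [hs1]
      linear_combination a ^ 2 * hsa - b ^ 2 * hsb + hsum - 2 * (a * b + y) * hab
  · simp only [Complex.ext_iff, pow_two, Complex.add_re, Complex.add_im, Complex.mul_re,
      Complex.mul_im, Complex.one_re, Complex.one_im, Complex.ofReal_re, Complex.ofReal_im,
      Complex.I_re, Complex.I_im]
    ring_nf
    rcases lt_trichotomy x 0 with hx | hx | hx
    · have hs1 : s = -1 := by rw [hs]; exact Real.sign_of_neg hx
      have hp : sa * sb = -x := by rw [hprod, abs_of_neg hx]
      rw [hs1]
      linear_combination (-2 * y) * hp + (-2 * (sa * sb)) * hab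
    · have hs1 : s = 0 := by rw [hs, hx, Real.sign_zero]
      rw [hs1, hx]
      ring
    · have hs1 : s = 1 := by rw [hs]; exact Real.sign_of_pos hx
      have hp : sa * sb = x := by rw [hprod, abs_of_pos hx]
      rw [hs1]
      linear_combination (2 * y) * hp + (2 * (sa * sb)) * hab
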